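/- Let μ, μ_A ∈ ℝ and σ > 0. Let w : ℝ → [0, 1] be measurable with w(2μ_A − θ) = w(θ) for all θ ∈ ℝ (symmetric about μ_A). Then | ∫ w(θ)·(μ_A − θ) dN(μ, σ²)(θ) | ≤ |μ_A − μ|, and the integral has the same sign as μ_A − μ. Interpreting w(θ) as the weight that the AI prior mean μ_A receives in the output of a user with preference θ, the societal bias of the output distribution never exceeds the AI bias |μ_A − μ|. -/

import Mathlib

open MeasureTheory ProbabilityTheory
open scoped NNReal ENNReal

-- transfer lemma
lemma gauss_integral_eq (m : ℝ) {v : ℝ≥0} (hv : v ≠ 0) (g : ℝ → ℝ) :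
    ∫ x, g x ∂(gaussianReal m v) = ∫ x, gaussianPDFReal m v x * g x := by
  rw [gaussianReal_of_var_ne_zero _ hv]
  have h : gaussianPDF m v = fun x => ((Real.toNNReal (gaussianPDFReal m v x) : ℝ≥0) : ℝ≥0∞) := rfl
  rw [h, integral_withDensity_eq_integral_smul ((measurable_gaussianPDFReal m v).real_toNNReal)]
  congr 1; ext x
  simp [NNReal.smul_def, Real.coe_toNNReal _ (gaussianPDFReal_nonneg m v x)]

lemma gauss_m1_zero {v : ℝ≥0} (hv0 : 0 < (v:ℝ)) :
    Integrable (fun x => gaussianPDFReal 0 v x * x) := by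
  have hb : 0 < ((2:ℝ)*(v:ℝ))⁻¹ := by positivity
  have heq : (fun x => gaussianPDFReal 0 v x * x)
      = fun x => (Real.sqrt (2*Real.pi*(v:ℝ)))⁻¹ * (x * Real.exp (-(((2:ℝ)*(v:ℝ))⁻¹) * x^2)) := by
    funext x
    simp only [gaussianPDFReal]
    rw [show -(((2:ℝ)*(v:ℝ))⁻¹) * x^2 = -(x-0)^2/(2*(v:ℝ)) by field_simp; ring]
    ring
  rw [heq]
  exact (integrable_mul_exp_neg_mul_sq hb).const_mul _

lemma gauss_shift (m : ℝ) (v : ℝ≥0) (x : ℝ) :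
    gaussianPDFReal m v x = gaussianPDFReal 0 v (x - m) := by
  rw [gaussianPDFReal_sub x m, zero_add]

lemma gauss_m1 (m : ℝ) {v : ℝ≥0} (hv0 : 0 < (v:ℝ)) :
    Integrable (fun x => gaussianPDFReal m v x * x) := by
  have h : Integrable (fun y => gaussianPDFReal 0 v y * (y + m)) := by
    have := (gauss_m1_zero hv0).add ((integrable_gaussianPDFReal 0 v).mul_const m)
    exact this.congr (ae_of_all _ fun y => by simp [mul_add])
  have h2 := h.comp_sub_right m
  refine h2.congr (ae_of_all _ fun x => ?_)
  simp only []; rw [gauss_shift m v x]; ring_nf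

lemma gauss_m1_int (m : ℝ) {v : ℝ≥0} (hv : v ≠ 0) :
    ∫ x, gaussianPDFReal m v x * x = m := by
  have hv0 : 0 < (v:ℝ) := lt_of_le_of_ne (v.coe_nonneg) (by exact_mod_cast (Ne.symm hv))
  have heq : (fun x => gaussianPDFReal m v x * x)
      = fun x => (fun y => gaussianPDFReal 0 v y * (y + m)) (x - m) := by
    funext x; simp only []; rw [gauss_shift m v x]; ring_nf
  rw [heq, integral_sub_right_eq_self (fun y => gaussianPDFReal 0 v y * (y + m)) m]
  have hodd : ∫ y, gaussianPDFReal 0 v y * y = 0 := by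
    have hrefl := integral_neg_eq_self (fun y => gaussianPDFReal 0 v y * y) volume
    have hF : ∀ y : ℝ, gaussianPDFReal 0 v (-y) = gaussianPDFReal 0 v y := by
      intro y; simp only [gaussianPDFReal]; ring_nf
    simp only [hF] at hrefl
    have : ∫ y, gaussianPDFReal 0 v y * -y = - ∫ y, gaussianPDFReal 0 v y * y := by
      rw [← integral_neg]; congr 1; funext y; ring
    rw [this] at hrefl; linarith
  have hsum : ∫ y, gaussianPDFReal 0 v y * (y + m)
      = (∫ y, gaussianPDFReal 0 v y * y) + ∫ y, gaussianPDFReal 0 v y * m := by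
    rw [← integral_add (gauss_m1_zero hv0) ((integrable_gaussianPDFReal 0 v).mul_const m)]
    congr 1; funext y; ring
  rw [hsum, hodd, zero_add, integral_mul_const, integral_gaussianPDFReal_eq_one 0 hv, one_mul]

lemma gauss_int_lin (m μA : ℝ) {v : ℝ≥0} (hv0 : 0 < (v:ℝ)) :
    Integrable (fun x => gaussianPDFReal m v x * (μA - x)) := by
  have := ((integrable_gaussianPDFReal m v).mul_const μA).sub (gauss_m1 m hv0)
  refine this.congr (ae_of_all _ fun x => ?_); simp only [Pi.sub_apply]; ring

lemma gauss_mean_lin (m μA : ℝ) {v : ℝ≥0} (hv : v ≠ 0) (hv0 : 0 < (v:ℝ)) :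
    ∫ x, gaussianPDFReal m v x * (μA - x) = μA - m := by
  have hsplit : ∫ x, gaussianPDFReal m v x * (μA - x)
      = (∫ x, gaussianPDFReal m v x * μA) - ∫ x, gaussianPDFReal m v x * x := by
    rw [← integral_sub ((integrable_gaussianPDFReal m v).mul_const μA) (gauss_m1 m hv0)]
    congr 1; funext x; ring
  rw [hsplit, integral_mul_const, integral_gaussianPDFReal_eq_one m hv, one_mul,
    gauss_m1_int m hv]

lemma gauss_int_wg (m μA : ℝ) {v : ℝ≥0} (hv0 : 0 < (v:ℝ)) (w : ℝ → ℝ)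
    (hmeas : Measurable w) (hmem : ∀ θ, w θ ∈ Set.Icc (0 : ℝ) 1) :
    Integrable (fun x => gaussianPDFReal m v x * (w x * (μA - x))) := by
  have hG : Integrable (fun x => gaussianPDFReal m v x * (|μA| + |x|)) := by
    have h1 := (integrable_gaussianPDFReal m v).mul_const |μA|
    have h2 : Integrable (fun x => gaussianPDFReal m v x * |x|) := by
      refine (gauss_m1 m hv0).abs.congr (ae_of_all _ fun x => ?_)
      show |gaussianPDFReal m v x * x| = _
      rw [abs_mul, abs_of_nonneg (gaussianPDFReal_nonneg m v x)]
    refine (h1.add h2).congr (ae_of_all _ fun x => ?_); simp only [Pi.add_apply]; ring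
  refine hG.mono ?_ (ae_of_all _ fun x => ?_)
  · exact ((measurable_gaussianPDFReal m v).mul
      (hmeas.mul (measurable_const.sub measurable_id))).aestronglyMeasurable
  · have hF := gaussianPDFReal_nonneg m v x
    have hw0 := (hmem x).1; have hw1 := (hmem x).2
    have habs : |μA - x| ≤ |μA| + |x| := abs_sub _ _
    rw [Real.norm_eq_abs, Real.norm_eq_abs,
      abs_of_nonneg (show (0:ℝ) ≤ gaussianPDFReal m v x * (|μA| + |x|) by positivity),
      abs_mul, abs_of_nonneg hF, abs_mul, abs_of_nonneg hw0]
    have : w x * |μA - x| ≤ |μA| + |x| := by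
      calc w x * |μA - x| ≤ 1 * |μA - x| := by
            exact mul_le_mul_of_nonneg_right hw1 (abs_nonneg _)
        _ ≤ |μA| + |x| := by rw [one_mul]; exact habs
    exact mul_le_mul_of_nonneg_left this hF

lemma gauss_refl (m μA : ℝ) (v : ℝ≥0) (x : ℝ) :
    gaussianPDFReal (2 * μA - m) v (2 * μA - x) = gaussianPDFReal m v x := by
  simp only [gaussianPDFReal]
  congr 1
  ring

lemma gauss_pointwise (m μA : ℝ) {v : ℝ≥0} (hv0 : 0 < (v:ℝ)) (x : ℝ) :
    0 ≤ ((μA - m) * (μA - x)) *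
      (gaussianPDFReal m v x - gaussianPDFReal (2 * μA - m) v x) := by
  have hC : 0 < (Real.sqrt (2 * Real.pi * (v:ℝ)))⁻¹ := by positivity
  simp only [gaussianPDFReal]
  rcases le_or_gt 0 ((μA - m) * (μA - x)) with h | h
  · refine mul_nonneg h (sub_nonneg.mpr ?_)
    refine mul_le_mul_of_nonneg_left (Real.exp_le_exp.mpr ?_) hC.le
    have hq : (x - (2 * μA - m))^2 - (x - m)^2 = 4 * ((μA - m) * (μA - x)) := by ring
    have h2v : 0 < 2 * (v:ℝ) := by positivity
    rw [div_le_div_iff₀ h2v h2v]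
    nlinarith
  · have h2v : 0 < 2 * (v:ℝ) := by positivity
    have hle : (Real.sqrt (2 * Real.pi * (v:ℝ)))⁻¹ * Real.exp (-(x - m)^2 / (2*(v:ℝ)))
        ≤ (Real.sqrt (2 * Real.pi * (v:ℝ)))⁻¹ * Real.exp (-(x - (2*μA - m))^2 / (2*(v:ℝ))) := by
      refine mul_le_mul_of_nonneg_left (Real.exp_le_exp.mpr ?_) hC.le
      rw [div_le_div_iff₀ h2v h2v]
      nlinarith
    nlinarith [hle]

/-- Societal bias never exceeds AI bias: if `w : ℝ → [0, 1]` is measurable and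
symmetric about the AI prior mean `μA` (i.e. `w(2μA − θ) = w(θ)`), then the
societal bias `∫ w(θ)(μA − θ) dN(μ, σ²)(θ)` is bounded in absolute value by
the AI bias `|μA − μ|` and has the same sign as `μA − μ`. -/
theorem societal_bias_le_ai_bias (μ μA σ : ℝ) (hσ : 0 < σ)
    (w : ℝ → ℝ) (hmeas : Measurable w)
    (hmem : ∀ θ, w θ ∈ Set.Icc (0 : ℝ) 1)
    (hsym : ∀ θ, w (2 * μA - θ) = w θ) :
    |∫ θ, w θ * (μA - θ) ∂(gaussianReal μ (Real.toNNReal (σ ^ 2)))| ≤ |μA - μ| ∧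
    0 ≤ (μA - μ) * ∫ θ, w θ * (μA - θ) ∂(gaussianReal μ (Real.toNNReal (σ ^ 2))) := by
  set v : ℝ≥0 := Real.toNNReal (σ ^ 2) with hvdef
  have hv0 : 0 < (v : ℝ) := by
    rw [hvdef, Real.coe_toNNReal _ (sq_nonneg σ)]; positivity
  have hv : v ≠ 0 := by
    intro h; rw [h] at hv0; simp at hv0
  set c : ℝ := μA - μ with hcdef
  set m' : ℝ := 2 * μA - μ with hm'def
  have htrans : ∫ θ, w θ * (μA - θ) ∂(gaussianReal μ v)
      = ∫ x, gaussianPDFReal μ v x * (w x * (μA - x)) := gauss_integral_eq μ hv _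
  set A : ℝ := ∫ x, gaussianPDFReal μ v x * (w x * (μA - x)) with hAdef
  set B : ℝ := ∫ x, gaussianPDFReal m' v x * (w x * (μA - x)) with hBdef
  have hIw : ∀ m : ℝ, Integrable (fun x => gaussianPDFReal m v x * (w x * (μA - x))) :=
    fun m => gauss_int_wg m μA hv0 w hmeas hmem
  have hIl : ∀ m : ℝ, Integrable (fun x => gaussianPDFReal m v x * (μA - x)) :=
    fun m => gauss_int_lin m μA hv0
  -- B = -A by reflection
  have hBA : B = -A := by
    have h1 : ∫ x, gaussianPDFReal m' v (2 * μA - x) * (w (2 * μA - x) * (μA - (2 * μA - x)))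
        = B := integral_sub_left_eq_self
          (fun y => gaussianPDFReal m' v y * (w y * (μA - y))) volume (2 * μA)
    have h2 : ∀ x : ℝ, gaussianPDFReal m' v (2 * μA - x) * (w (2 * μA - x) * (μA - (2 * μA - x)))
        = -(gaussianPDFReal μ v x * (w x * (μA - x))) := by
      intro x
      rw [hm'def, gauss_refl μ μA v x, hsym x]
      ring
    rw [← h1]
    simp_rw [h2]
    rw [integral_neg]
  -- sign and bound for c * (A - B)
  have hptw : ∀ x : ℝ, 0 ≤ w x * ((c * (μA - x)) *
      (gaussianPDFReal μ v x - gaussianPDFReal m' v x)) := by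
    intro x
    refine mul_nonneg (hmem x).1 ?_
    have := gauss_pointwise μ μA hv0 (v := v) x
    rw [hcdef, hm'def]
    calc (0:ℝ) ≤ ((μA - μ) * (μA - x)) *
        (gaussianPDFReal μ v x - gaussianPDFReal (2 * μA - μ) v x) := this
      _ = ((μA - μ) * (μA - x)) *
        (gaussianPDFReal μ v x - gaussianPDFReal (2 * μA - μ) v x) := rfl
  have hkey1 : 0 ≤ c * (A - B) := by
    have heq : c * (A - B) = ∫ x, c * (gaussianPDFReal μ v x * (w x * (μA - x))
        - gaussianPDFReal m' v x * (w x * (μA - x))) := by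
      rw [MeasureTheory.integral_const_mul, integral_sub (hIw μ) (hIw m')]
    rw [heq]
    refine integral_nonneg fun x => ?_
    have := hptw x
    calc (0:ℝ) ≤ w x * ((c * (μA - x)) *
        (gaussianPDFReal μ v x - gaussianPDFReal m' v x)) := this
      _ = c * (gaussianPDFReal μ v x * (w x * (μA - x))
        - gaussianPDFReal m' v x * (w x * (μA - x))) := by ring
  have hkey2 : c * (A - B) ≤ 2 * c ^ 2 := by
    have heq : c * (A - B) = ∫ x, c * (gaussianPDFReal μ v x * (w x * (μA - x))
        - gaussianPDFReal m' v x * (w x * (μA - x))) := by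
      rw [MeasureTheory.integral_const_mul, integral_sub (hIw μ) (hIw m')]
    have heq2 : ∫ x, c * (gaussianPDFReal μ v x * (μA - x)
        - gaussianPDFReal m' v x * (μA - x)) = 2 * c ^ 2 := by
      rw [MeasureTheory.integral_const_mul, integral_sub (hIl μ) (hIl m'),
        gauss_mean_lin μ μA hv hv0, gauss_mean_lin m' μA hv hv0, hm'def, hcdef]
      ring
    rw [heq, ← heq2]
    refine integral_mono (((hIw μ).sub (hIw m')).const_mul c)
      (((hIl μ).sub (hIl m')).const_mul c) fun x => ?_
    have hq : c * (gaussianPDFReal μ v x * (μA - x) - gaussianPDFReal m' v x * (μA - x))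
        - c * (gaussianPDFReal μ v x * (w x * (μA - x))
          - gaussianPDFReal m' v x * (w x * (μA - x)))
        = (1 - w x) * ((c * (μA - x)) *
          (gaussianPDFReal μ v x - gaussianPDFReal m' v x)) := by ring
    have hnn : 0 ≤ (1 - w x) * ((c * (μA - x)) *
        (gaussianPDFReal μ v x - gaussianPDFReal m' v x)) := by
      refine mul_nonneg (by linarith [(hmem x).2]) ?_
      have := gauss_pointwise μ μA hv0 (v := v) x
      rw [hcdef, hm'def]
      linarith [this]
    simp only []
    linarith [hq ▸ hnn]
  -- combine: B = -A gives A - B = 2A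
  have h2A : c * (2 * A) ≤ 2 * c ^ 2 := by rw [hBA] at hkey2; linarith
  have h0A : 0 ≤ c * A := by rw [hBA] at hkey1; linarith
  constructor
  · rw [htrans]
    rcases eq_or_ne c 0 with hc | hc
    · have hmm : m' = μ := by rw [hm'def]; rw [hcdef] at hc; linarith
      have hBA' : A = -A := by rw [← hBA, hBdef, hmm]
      have : A = 0 := by linarith
      rw [this, hc]
    · have hcpos : 0 < |c| := abs_pos.mpr hc
      have h1 : |c| * |A| ≤ |c| * |c| := by
        calc |c| * |A| = |c * A| := (abs_mul c A).symm
          _ = c * A := abs_of_nonneg h0A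
          _ ≤ c ^ 2 := by nlinarith
          _ = |c| * |c| := by rw [abs_mul_abs_self]; ring
      exact le_of_mul_le_mul_left h1 hcpos
  · rw [htrans]; exact h0A
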